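/- Fix δ ∈ (0, 1/2) and define P_δ on [0,1] by P_δ(z) = 2 for z ∈ [0, 1/2], P_δ(z) = 1/(1−z) for z ∈ (1/2, 1−δ], and P_δ(z) = (z − 1 + δ)/δ² + 1/δ for z ∈ (1−δ, 1]. Then P_δ is nondecreasing and convex on [0,1], and the function x ↦ x·(P_δ(1−x) − P_δ(x)) on [0, 1/2] attains its maximum at the unique point x = δ − δ². -/

import Mathlib

/-- The convex price function used to show unbounded Price of Anarchy:
`P_δ(z) = 2` on `[0,1/2]`, `1/(1−z)` on `(1/2, 1−δ]`, and
`(z−1+δ)/δ² + 1/δ` on `(1−δ, 1]`. -/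
noncomputable def Pdelta (δ : ℝ) : ℝ → ℝ := fun z =>
  if z ≤ 1 / 2 then 2
  else if z ≤ 1 - δ then 1 / (1 - z)
  else (z - 1 + δ) / δ ^ 2 + 1 / δ

/-- A function with a supporting line at every point of a convex set is convex there. -/
lemma convexOn_of_support_line (s : Set ℝ) (hs : Convex ℝ s) (f : ℝ → ℝ)
    (h : ∀ y ∈ s, ∃ m : ℝ, ∀ z ∈ s, f y + m * (z - y) ≤ f z) :
    ConvexOn ℝ s f := by
  refine ⟨hs, fun x hx z hz a b ha hb hab => ?_⟩
  have hb' : b = 1 - a := by linarith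
  subst hb'
  obtain ⟨m, hm⟩ := h (a • x + (1 - a) • z) (hs hx hz ha hb hab)
  have h1 := hm x hx
  have h2 := hm z hz
  simp only [smul_eq_mul] at h1 h2 ⊢
  nlinarith [mul_le_mul_of_nonneg_left h1 ha, mul_le_mul_of_nonneg_left h2 hb]

theorem stmt4 (δ : ℝ) (hδ : δ ∈ Set.Ioo (0 : ℝ) (1 / 2)) :
    MonotoneOn (Pdelta δ) (Set.Icc 0 1) ∧
    ConvexOn ℝ (Set.Icc 0 1) (Pdelta δ) ∧
    (∀ x ∈ Set.Icc (0 : ℝ) (1 / 2),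
      x * (Pdelta δ (1 - x) - Pdelta δ x) ≤
        (δ - δ ^ 2) * (Pdelta δ (1 - (δ - δ ^ 2)) - Pdelta δ (δ - δ ^ 2))) ∧
    (∀ x ∈ Set.Icc (0 : ℝ) (1 / 2),
      x * (Pdelta δ (1 - x) - Pdelta δ x) =
        (δ - δ ^ 2) * (Pdelta δ (1 - (δ - δ ^ 2)) - Pdelta δ (δ - δ ^ 2)) →
      x = δ - δ ^ 2) := by
  obtain ⟨h0, h1⟩ := hδ
  have hδ1 : δ < 1 := by linarith
  have hδ2 : (0:ℝ) < δ ^ 2 := by positivity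
  have hδne : δ ≠ 0 := ne_of_gt h0
  have hA : ∀ z : ℝ, z ≤ 1/2 → Pdelta δ z = 2 := by
    intro z hz; simp only [Pdelta]; rw [if_pos hz]
  have hB : ∀ z : ℝ, 1/2 < z → z ≤ 1 - δ → Pdelta δ z = 1/(1-z) := by
    intro z hz hz'; simp only [Pdelta]; rw [if_neg (by linarith), if_pos hz']
  have hC : ∀ z : ℝ, 1 - δ < z → Pdelta δ z = (z - 1 + δ)/δ^2 + 1/δ := by
    intro z hz; simp only [Pdelta]; rw [if_neg (by linarith), if_neg (by linarith)]
  -- Monotonicity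
  have mono : MonotoneOn (Pdelta δ) (Set.Icc 0 1) := by
    rintro a ⟨ha0, ha1⟩ b ⟨hb0, hb1⟩ hab
    rcases le_or_gt b (1/2) with hb | hb
    · rw [hA a (hab.trans hb), hA b hb]
    · rcases le_or_gt b (1-δ) with hb' | hb'
      · rw [hB b hb hb']
        have hb1' : (0:ℝ) < 1 - b := by linarith
        rcases le_or_gt a (1/2) with ha | ha
        · rw [hA a ha, le_div_iff₀ hb1']; linarith
        · rw [hB a ha (hab.trans hb')]
          exact one_div_le_one_div_of_le hb1' (by linarith)
      · rw [hC b hb']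
        have h2 : (0:ℝ) ≤ (b - 1 + δ)/δ^2 := div_nonneg (by linarith) (le_of_lt hδ2)
        rcases le_or_gt a (1/2) with ha | ha
        · rw [hA a ha]
          have h3 : (2:ℝ) ≤ 1/δ := by rw [le_div_iff₀ h0]; linarith
          linarith
        · rcases le_or_gt a (1-δ) with ha' | ha'
          · rw [hB a ha ha']
            have h3 : 1/(1-a) ≤ 1/δ := one_div_le_one_div_of_le h0 (by linarith)
            linarith
          · rw [hC a ha']
            have h3 : (a - 1 + δ)/δ^2 ≤ (b - 1 + δ)/δ^2 := by gcongr
            linarith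
  have hge2 : ∀ z ∈ Set.Icc (0:ℝ) 1, 2 ≤ Pdelta δ z := by
    intro z hz
    have := mono (Set.mem_Icc.mpr ⟨le_refl 0, by norm_num⟩) hz hz.1
    rwa [hA 0 (by norm_num)] at this
  -- Convexity via supporting lines
  have conv : ConvexOn ℝ (Set.Icc 0 1) (Pdelta δ) := by
    apply convexOn_of_support_line _ (convex_Icc 0 1)
    rintro y ⟨hy0, hy1⟩
    rcases le_or_gt y (1/2) with hy | hy
    · refine ⟨0, fun z hz => ?_⟩
      rw [hA y hy]
      simpa using hge2 z hz
    · rcases le_or_gt y (1-δ) with hy' | hy'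
      · refine ⟨1/(1-y)^2, fun z hz => ?_⟩
        obtain ⟨hz0, hz1⟩ := hz
        have hy1' : (0:ℝ) < 1 - y := by linarith
        have hyne : (1:ℝ) - y ≠ 0 := ne_of_gt hy1'
        rw [hB y hy hy']
        have e : 1/(1-y) + 1/(1-y)^2 * (z - y) = ((1-y) + (z-y))/(1-y)^2 := by
          field_simp
        rw [e]
        rcases le_or_gt z (1/2) with hz | hz
        · rw [hA z hz, div_le_iff₀ (by positivity)]
          nlinarith [sq_nonneg (y - 1/2)]
        · rcases le_or_gt z (1-δ) with hz' | hz'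
          · rw [hB z hz hz', div_le_div_iff₀ (by positivity) (by linarith)]
            nlinarith [sq_nonneg (y - z)]
          · rw [hC z hz',
              show (z-1+δ)/δ^2 + 1/δ = (z-1+2*δ)/δ^2 from by field_simp; ring,
              div_le_div_iff₀ (by positivity) hδ2]
            nlinarith [mul_nonneg (mul_nonneg (show (0:ℝ) ≤ 1-y-δ by linarith)
                (show (0:ℝ) ≤ 1-y+δ by linarith)) (show (0:ℝ) ≤ z-1+δ by linarith),
              mul_nonneg h0.le (sq_nonneg (1-y-δ))]
      · refine ⟨1/δ^2, fun z hz => ?_⟩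
        obtain ⟨hz0, hz1⟩ := hz
        rw [hC y hy']
        have e : (y-1+δ)/δ^2 + 1/δ + 1/δ^2 * (z - y) = (z-1+2*δ)/δ^2 := by
          field_simp; ring
        rw [e]
        rcases le_or_gt z (1/2) with hz | hz
        · rw [hA z hz, div_le_iff₀ hδ2]
          nlinarith [sq_nonneg (δ - 1/2)]
        · rcases le_or_gt z (1-δ) with hz' | hz'
          · rw [hB z hz hz', div_le_div_iff₀ hδ2 (by linarith)]
            nlinarith [sq_nonneg (1-z-δ)]
          · rw [hC z hz',
              show (z-1+δ)/δ^2 + 1/δ = (z-1+2*δ)/δ^2 from by field_simp; ring]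
  -- Evaluations at the optimum
  have hPc : Pdelta δ (δ - δ^2) = 2 := hA _ (by nlinarith)
  have hP1c : Pdelta δ (1 - (δ - δ^2)) = 1 + 1/δ := by
    rw [hC _ (by nlinarith), show (1 - (δ - δ^2) - 1 + δ) = δ^2 from by ring,
      div_self (ne_of_gt hδ2)]
  have hM : (δ - δ^2) * (Pdelta δ (1 - (δ - δ^2)) - Pdelta δ (δ - δ^2)) = (1-δ)^2 := by
    rw [hPc, hP1c]
    field_simp
    ring
  -- Strict suboptimality away from the optimum
  have strict : ∀ x ∈ Set.Icc (0:ℝ) (1/2), x ≠ δ - δ^2 →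
      x * (Pdelta δ (1-x) - Pdelta δ x) < (1-δ)^2 := by
    rintro x ⟨hx0, hx1⟩ hne
    rw [hA x hx1]
    rcases lt_or_ge x δ with hx | hx
    · rw [hC (1-x) (by linarith), show (1 - x - 1 + δ) = δ - x from by ring]
      have e : x * ((δ - x)/δ^2 + 1/δ - 2) = (2*x*(δ-δ^2) - x^2)/δ^2 := by
        field_simp; ring
      rw [e, div_lt_iff₀ hδ2]
      have hsq : 0 < (x - (δ - δ^2))^2 :=
        lt_of_le_of_ne (sq_nonneg _) (Ne.symm (pow_ne_zero 2 (sub_ne_zero.mpr hne)))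
      nlinarith [hsq]
    · rcases lt_or_eq_of_le hx1 with hx' | hx'
      · rw [hB (1-x) (by linarith) (by linarith), show (1 - (1-x)) = x from by ring]
        have hx0' : (0:ℝ) < x := lt_of_lt_of_le h0 hx
        have e : x * (1/x - 2) = 1 - 2*x := by field_simp
        rw [e]; nlinarith
      · subst hx'
        rw [show (1:ℝ) - 1/2 = 1/2 from by norm_num, hA (1/2) (le_refl _)]
        nlinarith
  refine ⟨mono, conv, ?_, ?_⟩
  · intro x hx
    by_cases hne : x = δ - δ^2
    · exact le_of_eq (by rw [hne])
    · rw [hM]; exact (strict x hx hne).le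
  · intro x hx heq
    by_contra hne
    rw [hM] at heq
    exact absurd heq (strict x hx hne).ne
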